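/- Let d, N ∈ ℕ, γ > β > 0, and let (a_ij), (b_ij) be symmetric N×N real matrices with zero diagonal, with a_ij > 0 and b_ij > 0 for all i ≠ j, satisfying the strict triangle inequality a_ik + a_kj > a_ij and b_ik + b_kj > b_ij for all pairwise distinct i, j, k. Then for every u ∈ ℳ and every 0 < h ≤ h₀: E_h(u) ≥ (√h₀/(√h + √h₀))^{d+1} · E_{h₀}(u). -/

import Mathlib

open Real MeasureTheory Filter Topology
open Pointwise

/-- The `d`-dimensional heat kernel `G_t(z) = (4πt)^{-d/2} exp(-|z|²/(4t))`. -/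
noncomputable def heatK (d : ℕ) (t : ℝ) (z : Fin d → ℝ) : ℝ :=
  (4 * Real.pi * t) ^ (-(d : ℝ) / 2) * Real.exp (-(∑ i, z i ^ 2) / (4 * t))

/-- The rescaled kernel `K^h_ij(z) = h^{-d/2}·(a_ij G_γ + b_ij G_β)(z/√h)`. -/
noncomputable def Khij (d : ℕ) (γ β aij bij h : ℝ) (z : Fin d → ℝ) : ℝ :=
  h ^ (-(d : ℝ) / 2) *
    (aij * heatK d γ ((Real.sqrt h)⁻¹ • z) + bij * heatK d β ((Real.sqrt h)⁻¹ • z))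

/-- Convolution `(K*u)(x) = ∫ K(z) u(x−z) dz`. -/
noncomputable def conv {d : ℕ} (K : (Fin d → ℝ) → ℝ) (u : (Fin d → ℝ) → ℝ)
    (x : Fin d → ℝ) : ℝ :=
  ∫ z, K z * u (x - z)

/-- The unit box `[0,1)^d`. -/
def unitBox (d : ℕ) : Set (Fin d → ℝ) := Set.univ.pi fun _ => Set.Ico (0 : ℝ) 1

/-- `ℤ^d`-periodicity. -/
def ZPeriodic {d : ℕ} {α : Type*} (u : (Fin d → ℝ) → α) : Prop :=
  ∀ (x : Fin d → ℝ) (k : Fin d → ℤ), u (x + fun i => (k i : ℝ)) = u x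

/-- Membership in `ℳ`: measurable `ℤ^d`-periodic functions with values in `[0,1]^N`
summing to `1` a.e. -/
def memM {d N : ℕ} (u : (Fin d → ℝ) → Fin N → ℝ) : Prop :=
  Measurable u ∧ ZPeriodic u ∧ (∀ x i, u x i ∈ Set.Icc (0 : ℝ) 1) ∧
    ∀ᵐ x ∂(volume : Measure (Fin d → ℝ)), ∑ i, u x i = 1

/-- Membership in `𝒜`: elements of `ℳ` with values in `{0,1}^N`. -/
def memA {d N : ℕ} (u : (Fin d → ℝ) → Fin N → ℝ) : Prop :=
  memM u ∧ ∀ x i, u x i = 0 ∨ u x i = 1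

/-- The approximate energy `E_h(u) = h^{-1/2} Σ_{i,j} ∫_{[0,1)^d} u_i K^h_ij * u_j dx`. -/
noncomputable def Eh {d N : ℕ} (γ β : ℝ) (a b : Fin N → Fin N → ℝ) (h : ℝ)
    (u : (Fin d → ℝ) → Fin N → ℝ) : ℝ :=
  (Real.sqrt h)⁻¹ * ∑ i, ∑ j, ∫ x in unitBox d,
    u x i * conv (Khij d γ β (a i j) (b i j) h) (fun y => u y j) x

/-- The squared distance
`d_h(u,v)² = -2√h Σ_{i,j} ∫_{[0,1)^d} (u_i-v_i) K^h_ij * (u_j-v_j) dx`. -/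
noncomputable def dsq {d N : ℕ} (γ β : ℝ) (a b : Fin N → Fin N → ℝ) (h : ℝ)
    (u v : (Fin d → ℝ) → Fin N → ℝ) : ℝ :=
  -2 * Real.sqrt h * ∑ i, ∑ j, ∫ x in unitBox d,
    (u x i - v x i) * conv (Khij d γ β (a i j) (b i j) h) (fun y => u y j - v y j) x

lemma aux_heatK_nonneg (d : ℕ) {t : ℝ} (ht : 0 < t) (z : Fin d → ℝ) : 0 ≤ heatK d t z :=
  mul_nonneg (Real.rpow_nonneg (by positivity) _) (Real.exp_pos _).le

lemma aux_heatK_measurable (d : ℕ) (t : ℝ) : Measurable (heatK d t) := by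
  apply Measurable.mul measurable_const
  apply Real.measurable_exp.comp
  exact ((Finset.measurable_sum Finset.univ
    (fun i _ => ((measurable_pi_apply i).pow_const 2))).neg).div_const _

lemma aux_heatK_integrable (d : ℕ) {t : ℝ} (ht : 0 < t) : Integrable (heatK d t) := by
  have h1 : Integrable (fun z : Fin d → ℝ => ∏ i, Real.exp (-(1/(4*t)) * (z i)^2)) :=
    Integrable.fintype_prod (fun i => integrable_exp_neg_mul_sq (by positivity))
  have h2 : (heatK d t) = fun z => (4*Real.pi*t) ^ (-(d:ℝ)/2) *
      ∏ i, Real.exp (-(1/(4*t)) * (z i)^2) := by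
    funext z
    rw [heatK]
    congr 1
    have : -(∑ i, z i ^ 2) / (4 * t) = ∑ i, -(1/(4*t)) * z i ^ 2 := by
      rw [← Finset.mul_sum]; ring
    rw [this, Real.exp_sum]
  rw [h2]; exact h1.const_mul _

lemma aux_heatK_anti (d : ℕ) {t : ℝ} (ht : 0 < t) {c : ℝ} (hc : 1 ≤ c) (z : Fin d → ℝ) :
    heatK d t (c • z) ≤ heatK d t z := by
  have hsum : ∑ i, z i ^ 2 ≤ ∑ i, (c • z) i ^ 2 := by
    refine Finset.sum_le_sum fun i _ => ?_
    have h1 : (c • z) i ^ 2 = c^2 * z i ^ 2 := by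
      simp [Pi.smul_apply, smul_eq_mul, mul_pow]
    rw [h1]; nlinarith [sq_nonneg (z i), sq_nonneg (c - 1), sq_nonneg (z i * (c-1))]
  unfold heatK
  refine mul_le_mul_of_nonneg_left (Real.exp_le_exp.2 ?_) (Real.rpow_nonneg (by positivity) _)
  rw [div_eq_mul_inv, div_eq_mul_inv]
  exact mul_le_mul_of_nonneg_right (neg_le_neg hsum) (by positivity)

lemma aux_setIntegral_unitBox_translate {d : ℕ} {g : (Fin d → ℝ) → ℝ} (hg : ZPeriodic g)
    (z : Fin d → ℝ) :
    ∫ x in unitBox d, g (x - z) = ∫ x in unitBox d, g x := by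
  classical
  set b := Pi.basisFun ℝ (Fin d) with hb
  have h1 : IsAddFundamentalDomain (↥(Submodule.span ℤ (Set.range ⇑b)))
      (ZSpan.fundamentalDomain b) volume := ZSpan.isAddFundamentalDomain b volume
  haveI : VAddCommClass (Fin d → ℝ) (↥(Submodule.span ℤ (Set.range ⇑b))) (Fin d → ℝ) :=
    ⟨fun a l x => by
      show a + ((l : Fin d → ℝ) + x) = (l : Fin d → ℝ) + (a + x)
      abel⟩
  have h2 : IsAddFundamentalDomain (↥(Submodule.span ℤ (Set.range ⇑b)))
      ((-z) +ᵥ ZSpan.fundamentalDomain b) volume := h1.vadd_of_comm (-z)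
  have hinv : ∀ (l : ↥(Submodule.span ℤ (Set.range ⇑b))) (x : Fin d → ℝ),
      g (l +ᵥ x) = g x := by
    rintro ⟨l, hl⟩ x
    obtain ⟨k, hk⟩ := (Submodule.mem_span_range_iff_exists_fun ℤ).1 hl
    have hlk : l = fun i => (k i : ℝ) := by
      funext j
      rw [← hk]
      simp [hb, Finset.sum_apply, Pi.basisFun_apply, Pi.single_apply, Finset.sum_ite_eq,
        Finset.sum_ite_eq']
    have hvadd : ((⟨l, hl⟩ : ↥(Submodule.span ℤ (Set.range ⇑b))) +ᵥ x)
        = x + fun i => (k i : ℝ) := by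
      show l + x = x + fun i => (k i : ℝ)
      rw [hlk, add_comm]
    rw [hvadd, hg x k]
  have hbox : ZSpan.fundamentalDomain b = unitBox d := by
    rw [hb, ZSpan.fundamentalDomain_pi_basisFun]; rfl
  haveI : MeasurableVAdd (↥(Submodule.span ℤ (Set.range ⇑b))) (Fin d → ℝ) := by
    constructor
    · intro a
      show Measurable fun l : ↥(Submodule.span ℤ (Set.range ⇑b)) => (l : Fin d → ℝ) + a
      exact measurable_subtype_coe.add_const a
  haveI : VAddInvariantMeasure (↥(Submodule.span ℤ (Set.range ⇑b))) (Fin d → ℝ) volume := by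
    refine ⟨fun c s _ => ?_⟩
    show volume ((fun x => (c : Fin d → ℝ) + x) ⁻¹' s) = volume s
    exact measure_preimage_add volume _ s
  have key : ∫ x in ((-z) +ᵥ ZSpan.fundamentalDomain b), g x
      = ∫ x in ZSpan.fundamentalDomain b, g x := h2.setIntegral_eq h1 hinv
  have himg : ∫ x in ((-z) +ᵥ ZSpan.fundamentalDomain b), g x
      = ∫ x in ZSpan.fundamentalDomain b, g (-z + x) := by
    rw [← Set.image_vadd]
    exact (measurePreserving_add_left volume (-z)).setIntegral_image_emb
      (MeasurableEquiv.addLeft (-z)).measurableEmbedding g _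
  have hsub : ∀ x : Fin d → ℝ, g (-z + x) = g (x - z) := by
    intro x; rw [neg_add_eq_sub]
  have e1 : ∫ x in unitBox d, g (x - z) = ∫ x in ZSpan.fundamentalDomain b, g (-z + x) := by
    rw [hbox]
    exact integral_congr_ae (ae_of_all _ fun x => (hsub x).symm)
  rw [e1, ← himg, key, hbox]

lemma aux_unitBox_meas (d : ℕ) : MeasurableSet (unitBox d) :=
  MeasurableSet.univ_pi fun _ => measurableSet_Ico

lemma aux_volume_unitBox (d : ℕ) : (volume : Measure (Fin d → ℝ)) (unitBox d) = 1 := by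
  rw [unitBox, volume_pi_pi]
  simp [Real.volume_Ico]

lemma aux_finiteBox (d : ℕ) :
    IsFiniteMeasure ((volume : Measure (Fin d → ℝ)).restrict (unitBox d)) := by
  constructor
  rw [Measure.restrict_apply_univ, aux_volume_unitBox]
  exact ENNReal.one_lt_top

lemma aux_ae_translate {d : ℕ} {P : (Fin d → ℝ) → Prop}
    (hP : ∀ᵐ x ∂(volume : Measure (Fin d → ℝ)), P x) (z : Fin d → ℝ) :
    ∀ᵐ x ∂(volume : Measure (Fin d → ℝ)), P (x - z) := by
  have h := (measurePreserving_add_right (volume : Measure (Fin d → ℝ))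
    (-z)).quasiMeasurePreserving.ae hP
  simpa [← sub_eq_add_neg] using h

lemma aux_intOn {d : ℕ} {v1 v2 : (Fin d → ℝ) → ℝ} (h1 : Measurable v1) (h2 : Measurable v2)
    (hb1 : ∀ x, v1 x ∈ Set.Icc (0:ℝ) 1) (hb2 : ∀ x, v2 x ∈ Set.Icc (0:ℝ) 1) :
    IntegrableOn (fun x => v1 x * v2 x) (unitBox d) := by
  haveI := aux_finiteBox d
  refine (integrable_const (1:ℝ)).mono' ((h1.mul h2).aestronglyMeasurable) ?_
  refine ae_of_all _ fun x => ?_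
  obtain ⟨ha1, ha2⟩ := hb1 x
  obtain ⟨hc1, hc2⟩ := hb2 x
  rw [Real.norm_eq_abs, abs_of_nonneg (mul_nonneg ha1 hc1)]
  nlinarith

lemma aux_setIntegral_mem {d : ℕ} {v1 v2 : (Fin d → ℝ) → ℝ}
    (h1 : Measurable v1) (h2 : Measurable v2)
    (hb1 : ∀ x, v1 x ∈ Set.Icc (0:ℝ) 1) (hb2 : ∀ x, v2 x ∈ Set.Icc (0:ℝ) 1) :
    (∫ x in unitBox d, v1 x * v2 x) ∈ Set.Icc (0:ℝ) 1 := by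
  constructor
  · exact setIntegral_nonneg (aux_unitBox_meas d) fun x _ => mul_nonneg (hb1 x).1 (hb2 x).1
  · have hle : ∫ x in unitBox d, v1 x * v2 x ≤ ∫ _x in unitBox d, (1:ℝ) := by
      refine setIntegral_mono_on (aux_intOn h1 h2 hb1 hb2)
        (integrableOn_const ?_) (aux_unitBox_meas d) (fun x _ => ?_)
      · rw [aux_volume_unitBox]; exact ENNReal.one_ne_top
      · obtain ⟨ha1, ha2⟩ := hb1 x
        obtain ⟨hc1, hc2⟩ := hb2 x
        nlinarith
    calc ∫ x in unitBox d, v1 x * v2 x ≤ ∫ _x in unitBox d, (1:ℝ) := hle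
      _ = 1 := by rw [setIntegral_const, measureReal_def, aux_volume_unitBox]; simp

noncomputable def corrI {d N : ℕ} (u : (Fin d → ℝ) → Fin N → ℝ) (i j : Fin N)
    (z : Fin d → ℝ) : ℝ :=
  ∫ x in unitBox d, u x i * u (x - z) j

noncomputable def corrF {d N : ℕ} (c : Fin N → Fin N → ℝ) (u : (Fin d → ℝ) → Fin N → ℝ)
    (z : Fin d → ℝ) : ℝ :=
  ∑ i, ∑ j, c i j * corrI u i j z

section corr
variable {d N : ℕ} {u : (Fin d → ℝ) → Fin N → ℝ}

lemma aux_meas_ui (hu : memM u) (i : Fin N) : Measurable fun x => u x i :=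
  (measurable_pi_apply i).comp hu.1

lemma aux_meas_ui_sub (hu : memM u) (i : Fin N) (z : Fin d → ℝ) :
    Measurable fun x => u (x - z) i :=
  (aux_meas_ui hu i).comp (measurable_id.sub_const z)

lemma aux_corrI_mem (hu : memM u) (i j : Fin N) (z : Fin d → ℝ) :
    corrI u i j z ∈ Set.Icc (0:ℝ) 1 :=
  aux_setIntegral_mem (aux_meas_ui hu i) (aux_meas_ui_sub hu j z)
    (fun x => hu.2.2.1 x i) (fun x => hu.2.2.1 _ j)

lemma aux_corrI_meas (hu : memM u) (i j : Fin N) : Measurable (corrI u i j) := by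
  have hsm : StronglyMeasurable fun p : ((Fin d → ℝ) × (Fin d → ℝ)) =>
      u p.2 i * u (p.2 - p.1) j := by
    apply Measurable.stronglyMeasurable
    exact ((measurable_pi_apply i).comp (hu.1.comp measurable_snd)).mul
      ((measurable_pi_apply j).comp (hu.1.comp (measurable_snd.sub measurable_fst)))
  exact (hsm.integral_prod_right'
    (ν := (volume : Measure (Fin d → ℝ)).restrict (unitBox d))).measurable

lemma aux_corrF_meas (hu : memM u) (c : Fin N → Fin N → ℝ) : Measurable (corrF c u) := by
  apply Finset.measurable_sum
  intro i _
  apply Finset.measurable_sum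
  intro j _
  exact (aux_corrI_meas hu i j).const_mul _

lemma aux_corrF_nonneg (hu : memM u) {c : Fin N → Fin N → ℝ} (hc : ∀ i j, 0 ≤ c i j)
    (z : Fin d → ℝ) : 0 ≤ corrF c u z :=
  Finset.sum_nonneg fun i _ => Finset.sum_nonneg fun j _ =>
    mul_nonneg (hc i j) (aux_corrI_mem hu i j z).1

lemma aux_corrF_le (hu : memM u) {c : Fin N → Fin N → ℝ} (hc : ∀ i j, 0 ≤ c i j)
    (z : Fin d → ℝ) : corrF c u z ≤ ∑ i, ∑ j, c i j :=
  Finset.sum_le_sum fun i _ => Finset.sum_le_sum fun j _ => by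
    have := aux_corrI_mem hu i j z
    nlinarith [this.1, this.2, hc i j]

end corr

lemma aux_triple_ineq {N : ℕ} (c : Fin N → Fin N → ℝ) (hc0 : ∀ i j, 0 ≤ c i j)
    (hctri : ∀ i j k, c i j ≤ c i k + c k j)
    (p q r : Fin N → ℝ) (hp : ∀ i, 0 ≤ p i) (hq : ∀ i, 0 ≤ q i) (hr : ∀ i, 0 ≤ r i)
    (hps : ∑ i, p i = 1) (hqs : ∑ i, q i = 1) (hrs : ∑ i, r i = 1) :
    ∑ i, ∑ j, c i j * (p i * r j) ≤
      (∑ i, ∑ k, c i k * (p i * q k)) + ∑ k, ∑ j, c k j * (q k * r j) := by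
  have key : ∀ i j, c i j * (p i * r j) = ∑ k, c i j * (p i * q k * r j) := by
    intro i j
    have h1 : ∀ k, c i j * (p i * q k * r j) = (c i j * (p i * r j)) * q k := fun k => by ring
    simp_rw [h1, ← Finset.mul_sum, hqs, mul_one]
  calc ∑ i, ∑ j, c i j * (p i * r j)
      = ∑ i, ∑ j, ∑ k, c i j * (p i * q k * r j) := by
        exact Finset.sum_congr rfl fun i _ => Finset.sum_congr rfl fun j _ => key i j
    _ ≤ ∑ i, ∑ j, ∑ k, (c i k + c k j) * (p i * q k * r j) := by
        refine Finset.sum_le_sum fun i _ => Finset.sum_le_sum fun j _ =>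
          Finset.sum_le_sum fun k _ => ?_
        have hnn : 0 ≤ p i * q k * r j := mul_nonneg (mul_nonneg (hp i) (hq k)) (hr j)
        exact mul_le_mul_of_nonneg_right (hctri i j k) hnn
    _ = (∑ i, ∑ j, ∑ k, c i k * (p i * q k * r j))
        + ∑ i, ∑ j, ∑ k, c k j * (p i * q k * r j) := by
        simp_rw [add_mul, Finset.sum_add_distrib]
    _ = (∑ i, ∑ k, c i k * (p i * q k)) + ∑ k, ∑ j, c k j * (q k * r j) := by
        congr 1
        · refine Finset.sum_congr rfl fun i _ => ?_
          rw [Finset.sum_comm]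
          refine Finset.sum_congr rfl fun k _ => ?_
          have h2 : ∀ j, c i k * (p i * q k * r j) = (c i k * (p i * q k)) * r j :=
            fun j => by ring
          simp_rw [h2, ← Finset.mul_sum, hrs, mul_one]
        · have h3 : ∀ i j k, c k j * (p i * q k * r j) = p i * (c k j * (q k * r j)) := by
            intros; ring
          simp_rw [h3, ← Finset.mul_sum, ← Finset.sum_mul, hps, one_mul]
          exact Finset.sum_comm

lemma aux_integral_double_sum {α : Type*} [MeasurableSpace α] {μ : Measure α}
    {ι κ : Type*} [Fintype ι] [Fintype κ] (f : ι → κ → α → ℝ)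
    (hf : ∀ i j, Integrable (f i j) μ) :
    ∫ x, ∑ i, ∑ j, f i j x ∂μ = ∑ i, ∑ j, ∫ x, f i j x ∂μ := by
  rw [integral_finset_sum _ (fun i _ => integrable_finset_sum _ (fun j _ => hf i j))]
  exact Finset.sum_congr rfl fun i _ => integral_finset_sum _ (fun j _ => hf i j)

lemma aux_corrF_subadd {d N : ℕ} {u : (Fin d → ℝ) → Fin N → ℝ} {c : Fin N → Fin N → ℝ}
    (hu : memM u) (hc0 : ∀ i j, 0 ≤ c i j) (hctri : ∀ i j k, c i j ≤ c i k + c k j)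
    (z w : Fin d → ℝ) : corrF c u (z + w) ≤ corrF c u z + corrF c u w := by
  have hbnd := hu.2.2.1
  have hint : ∀ (v v' : Fin d → ℝ) (i j : Fin N),
      Integrable (fun x => c i j * (u (x - v) i * u (x - v') j))
        ((volume : Measure (Fin d → ℝ)).restrict (unitBox d)) := fun v v' i j =>
    (aux_intOn (aux_meas_ui_sub hu i v) (aux_meas_ui_sub hu j v')
      (fun x => hbnd _ i) (fun x => hbnd _ j)).const_mul _
  have hint0 : ∀ (v : Fin d → ℝ) (i j : Fin N),
      Integrable (fun x => c i j * (u x i * u (x - v) j))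
        ((volume : Measure (Fin d → ℝ)).restrict (unitBox d)) := fun v i j =>
    (aux_intOn (aux_meas_ui hu i) (aux_meas_ui_sub hu j v)
      (fun x => hbnd _ i) (fun x => hbnd _ j)).const_mul _
  have e1 : ∀ v : Fin d → ℝ, corrF c u v
      = ∫ x in unitBox d, ∑ i, ∑ j, c i j * (u x i * u (x - v) j) := by
    intro v
    rw [aux_integral_double_sum _ (fun i j => hint0 v i j)]
    exact Finset.sum_congr rfl fun i _ => Finset.sum_congr rfl fun j _ =>
      (integral_const_mul _ _).symm
  have e2 : ∀ k j : Fin N, (∫ x in unitBox d, u (x - z) k * u (x - (z + w)) j)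
      = corrI u k j w := by
    intro k j
    have hper : ZPeriodic (fun y => u y k * u (y - w) j) := by
      intro y m
      dsimp only
      have h1 : ((y + fun i => ((m i : ℤ) : ℝ)) - w) = (y - w) + fun i => ((m i : ℤ) : ℝ) := by
        rw [add_sub_right_comm]
      rw [h1, hu.2.1 y m, hu.2.1 (y - w) m]
    have h3 : ∀ x : Fin d → ℝ, u (x - z) k * u (x - (z + w)) j
        = (fun y => u y k * u (y - w) j) (x - z) := by
      intro x
      dsimp only
      rw [sub_sub]
    calc ∫ x in unitBox d, u (x - z) k * u (x - (z + w)) j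
        = ∫ x in unitBox d, (fun y => u y k * u (y - w) j) (x - z) :=
          integral_congr_ae (ae_of_all _ fun x => h3 x)
      _ = ∫ x in unitBox d, u x k * u (x - w) j :=
          aux_setIntegral_unitBox_translate hper z
      _ = corrI u k j w := rfl
  have hae : ∀ᵐ x ∂((volume : Measure (Fin d → ℝ)).restrict (unitBox d)),
      (∑ i, ∑ j, c i j * (u x i * u (x - (z + w)) j)) ≤
      (∑ i, ∑ j, c i j * (u x i * u (x - z) j))
        + ∑ i, ∑ j, c i j * (u (x - z) i * u (x - (z + w)) j) := by
    refine ae_restrict_of_ae ?_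
    filter_upwards [hu.2.2.2, aux_ae_translate hu.2.2.2 z,
      aux_ae_translate hu.2.2.2 (z + w)] with x hx1 hx2 hx3
    exact aux_triple_ineq c hc0 hctri (u x) (u (x - z)) (u (x - (z + w)))
      (fun i => (hbnd x i).1) (fun i => (hbnd _ i).1) (fun i => (hbnd _ i).1) hx1 hx2 hx3
  have hS : Integrable (fun x => ∑ i, ∑ j, c i j * (u x i * u (x - (z + w)) j))
      ((volume : Measure (Fin d → ℝ)).restrict (unitBox d)) :=
    integrable_finset_sum _ fun i _ => integrable_finset_sum _ fun j _ => hint0 (z + w) i j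
  have hA : Integrable (fun x => ∑ i, ∑ j, c i j * (u x i * u (x - z) j))
      ((volume : Measure (Fin d → ℝ)).restrict (unitBox d)) :=
    integrable_finset_sum _ fun i _ => integrable_finset_sum _ fun j _ => hint0 z i j
  have hB : Integrable (fun x => ∑ i, ∑ j, c i j * (u (x - z) i * u (x - (z + w)) j))
      ((volume : Measure (Fin d → ℝ)).restrict (unitBox d)) :=
    integrable_finset_sum _ fun i _ => integrable_finset_sum _ fun j _ => hint z (z + w) i j
  calc corrF c u (z + w)
      = ∫ x in unitBox d, ∑ i, ∑ j, c i j * (u x i * u (x - (z + w)) j) := e1 (z + w)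
    _ ≤ ∫ x in unitBox d, ((∑ i, ∑ j, c i j * (u x i * u (x - z) j))
          + ∑ i, ∑ j, c i j * (u (x - z) i * u (x - (z + w)) j)) :=
        integral_mono_ae hS (hA.add hB) hae
    _ = (∫ x in unitBox d, ∑ i, ∑ j, c i j * (u x i * u (x - z) j))
          + ∫ x in unitBox d, ∑ i, ∑ j, c i j * (u (x - z) i * u (x - (z + w)) j) :=
        integral_add hA hB
    _ = corrF c u z + corrF c u w := by
        congr 1
        · exact (e1 z).symm
        · rw [aux_integral_double_sum _ (fun i j => hint z (z + w) i j)]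
          unfold corrF
          refine Finset.sum_congr rfl fun k _ => Finset.sum_congr rfl fun j _ => ?_
          rw [integral_const_mul, e2 k j]

lemma aux_sqrt_pow_mul (d : ℕ) {h : ℝ} (hh : 0 < h) :
    (Real.sqrt h) ^ d * h ^ (-(d:ℝ) / 2) = 1 := by
  rw [Real.sqrt_eq_rpow, ← Real.rpow_natCast (h ^ (1/2 : ℝ)) d, ← Real.rpow_mul hh.le,
    ← Real.rpow_add hh]
  rw [show (1/2 * (d:ℝ) + -(d:ℝ)/2 : ℝ) = 0 by ring, Real.rpow_zero]

lemma aux_integral_comp_sqrt_smul {d : ℕ} (g : (Fin d → ℝ) → ℝ) {h : ℝ} (hh : 0 < h) :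
    ∫ z, g z = (Real.sqrt h) ^ d * ∫ w, g (Real.sqrt h • w) := by
  have hs : 0 < Real.sqrt h := Real.sqrt_pos.2 hh
  have key := MeasureTheory.Measure.integral_comp_smul
    (volume : Measure (Fin d → ℝ)) g (Real.sqrt h)
  rw [Module.finrank_fin_fun] at key
  rw [key, smul_eq_mul, abs_of_nonneg (inv_nonneg.2 (pow_nonneg hs.le _)), ← mul_assoc,
    mul_inv_cancel₀ (by positivity), one_mul]

lemma aux_Khij_meas (d : ℕ) (γ β aij bij h : ℝ) : Measurable (Khij d γ β aij bij h) := by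
  apply Measurable.const_mul
  exact (((aux_heatK_measurable d γ).comp (measurable_const_smul _)).const_mul aij).add
    (((aux_heatK_measurable d β).comp (measurable_const_smul _)).const_mul bij)

lemma aux_Khij_integrable (d : ℕ) {γ β : ℝ} (hγ : 0 < γ) (hβ : 0 < β) (aij bij : ℝ)
    {h : ℝ} (hh : 0 < h) : Integrable (Khij d γ β aij bij h) := by
  have hs : (Real.sqrt h)⁻¹ ≠ 0 := inv_ne_zero (Real.sqrt_pos.2 hh).ne'
  have h1 : Integrable (fun z : Fin d → ℝ => aij * heatK d γ z + bij * heatK d β z) :=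
    ((aux_heatK_integrable d hγ).const_mul _).add ((aux_heatK_integrable d hβ).const_mul _)
  have h2 : Integrable (fun z : Fin d → ℝ =>
      aij * heatK d γ ((Real.sqrt h)⁻¹ • z) + bij * heatK d β ((Real.sqrt h)⁻¹ • z)) :=
    h1.comp_smul hs
  exact h2.const_mul _

lemma aux_int_heatK_mul {d : ℕ} {t : ℝ} (ht : 0 < t) {F : (Fin d → ℝ) → ℝ}
    (hF : Measurable F) {M : ℝ} (h0 : ∀ z, 0 ≤ F z) (hM : ∀ z, F z ≤ M) (s : ℝ) :
    Integrable (fun w => heatK d t w * F (s • w)) := by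
  refine ((aux_heatK_integrable d ht).const_mul M).mono'
    ((aux_heatK_measurable d t).mul (hF.comp (measurable_const_smul s))).aestronglyMeasurable
    (ae_of_all _ fun w => ?_)
  rw [Real.norm_eq_abs, abs_of_nonneg (mul_nonneg (aux_heatK_nonneg d ht w) (h0 _))]
  calc heatK d t w * F (s • w) ≤ heatK d t w * M :=
        mul_le_mul_of_nonneg_left (hM _) (aux_heatK_nonneg d ht w)
    _ = M * heatK d t w := by ring

lemma aux_Tij {d N : ℕ} {γ β : ℝ} (hγ : 0 < γ) (hβ : 0 < β)
    {u : (Fin d → ℝ) → Fin N → ℝ} (hu : memM u) (aij bij : ℝ) {h : ℝ} (hh : 0 < h)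
    (i j : Fin N) :
    (∫ x in unitBox d, u x i * conv (Khij d γ β aij bij h) (fun y => u y j) x)
      = aij * (∫ w, heatK d γ w * corrI u i j (Real.sqrt h • w))
        + bij * ∫ w, heatK d β w * corrI u i j (Real.sqrt h • w) := by
  have hbnd := hu.2.2.1
  set K := Khij d γ β aij bij h with hK
  have hKm : Measurable K := aux_Khij_meas d γ β aij bij h
  have hKi : Integrable K := aux_Khij_integrable d hγ hβ aij bij hh
  haveI := aux_finiteBox d
  set μB := (volume : Measure (Fin d → ℝ)).restrict (unitBox d) with hμB
  have hmeas : Measurable fun p : (Fin d → ℝ) × (Fin d → ℝ) =>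
      u p.1 i * (K p.2 * u (p.1 - p.2) j) :=
    ((measurable_pi_apply i).comp (hu.1.comp measurable_fst)).mul
      ((hKm.comp measurable_snd).mul
        ((measurable_pi_apply j).comp (hu.1.comp (measurable_fst.sub measurable_snd))))
  have hfub : Integrable (Function.uncurry fun x z => u x i * (K z * u (x - z) j))
      (μB.prod volume) := by
    have hdom : Integrable (fun p : (Fin d → ℝ) × (Fin d → ℝ) => (1:ℝ) * |K p.2|)
        (μB.prod volume) := (integrable_const (1:ℝ)).mul_prod hKi.abs
    refine hdom.mono' hmeas.aestronglyMeasurable (ae_of_all _ fun p => ?_)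
    simp only [Function.uncurry]
    obtain ⟨h1, h2⟩ := hbnd p.1 i
    obtain ⟨h3, h4⟩ := hbnd (p.1 - p.2) j
    rw [Real.norm_eq_abs, one_mul, abs_mul, abs_mul]
    calc |u p.1 i| * (|K p.2| * |u (p.1 - p.2) j|) ≤ 1 * (|K p.2| * 1) := by
          refine mul_le_mul (by rwa [abs_of_nonneg h1]) ?_ (by positivity) one_pos.le
          exact mul_le_mul_of_nonneg_left (by rwa [abs_of_nonneg h3]) (abs_nonneg _)
      _ = |K p.2| := by ring
  have step1 : (∫ x in unitBox d, u x i * conv K (fun y => u y j) x)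
      = ∫ x, (∫ z, u x i * (K z * u (x - z) j)) ∂μB := by
    refine integral_congr_ae (ae_of_all _ fun x => ?_)
    show u x i * (∫ z, K z * u (x - z) j) = _
    exact (integral_const_mul (u x i) _).symm
  have step2 : (∫ x, (∫ z, u x i * (K z * u (x - z) j)) ∂μB)
      = ∫ z, (∫ x, u x i * (K z * u (x - z) j) ∂μB) := integral_integral_swap hfub
  have step3 : ∀ z, (∫ x, u x i * (K z * u (x - z) j) ∂μB) = K z * corrI u i j z := by
    intro z
    have e : ∀ x, u x i * (K z * u (x - z) j) = K z * (u x i * u (x - z) j) := fun x => by ring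
    rw [integral_congr_ae (ae_of_all _ fun x => e x), integral_const_mul]
    rfl
  have step4 : (∫ z, K z * corrI u i j z)
      = (Real.sqrt h) ^ d * ∫ w, K (Real.sqrt h • w) * corrI u i j (Real.sqrt h • w) :=
    aux_integral_comp_sqrt_smul (fun z => K z * corrI u i j z) hh
  have hKs : ∀ w, K (Real.sqrt h • w)
      = h ^ (-(d:ℝ)/2) * (aij * heatK d γ w + bij * heatK d β w) := by
    intro w
    rw [hK, Khij, inv_smul_smul₀ (Real.sqrt_pos.2 hh).ne']
  have hintγ : Integrable (fun w => heatK d γ w * corrI u i j (Real.sqrt h • w)) :=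
    aux_int_heatK_mul hγ (aux_corrI_meas hu i j) (fun z => (aux_corrI_mem hu i j z).1)
      (fun z => (aux_corrI_mem hu i j z).2) _
  have hintβ : Integrable (fun w => heatK d β w * corrI u i j (Real.sqrt h • w)) :=
    aux_int_heatK_mul hβ (aux_corrI_meas hu i j) (fun z => (aux_corrI_mem hu i j z).1)
      (fun z => (aux_corrI_mem hu i j z).2) _
  have step5 : (∫ w, K (Real.sqrt h • w) * corrI u i j (Real.sqrt h • w))
      = h ^ (-(d:ℝ)/2) * (aij * (∫ w, heatK d γ w * corrI u i j (Real.sqrt h • w))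
          + bij * ∫ w, heatK d β w * corrI u i j (Real.sqrt h • w)) := by
    have e : ∀ w, K (Real.sqrt h • w) * corrI u i j (Real.sqrt h • w)
        = h ^ (-(d:ℝ)/2) * (aij * (heatK d γ w * corrI u i j (Real.sqrt h • w))
            + bij * (heatK d β w * corrI u i j (Real.sqrt h • w))) := by
      intro w; rw [hKs w]; ring
    rw [integral_congr_ae (ae_of_all _ fun w => e w), integral_const_mul]
    congr 1
    rw [integral_add (hintγ.const_mul aij) (hintβ.const_mul bij), integral_const_mul,
      integral_const_mul]
  calc (∫ x in unitBox d, u x i * conv K (fun y => u y j) x)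
      = ∫ z, K z * corrI u i j z := by
        rw [step1, step2]
        exact integral_congr_ae (ae_of_all _ fun z => step3 z)
    _ = ((Real.sqrt h) ^ d * h ^ (-(d:ℝ)/2))
          * (aij * (∫ w, heatK d γ w * corrI u i j (Real.sqrt h • w))
            + bij * ∫ w, heatK d β w * corrI u i j (Real.sqrt h • w)) := by
        rw [step4, step5]; ring
    _ = aij * (∫ w, heatK d γ w * corrI u i j (Real.sqrt h • w))
          + bij * ∫ w, heatK d β w * corrI u i j (Real.sqrt h • w) := by
        rw [aux_sqrt_pow_mul d hh, one_mul]

lemma aux_Eh_eq {d N : ℕ} {γ β : ℝ} (hγ : 0 < γ) (hβ : 0 < β)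
    {u : (Fin d → ℝ) → Fin N → ℝ} (hu : memM u) (a b : Fin N → Fin N → ℝ)
    {h : ℝ} (hh : 0 < h) :
    Eh γ β a b h u = (Real.sqrt h)⁻¹ *
      ((∫ w, heatK d γ w * corrF a u (Real.sqrt h • w))
        + ∫ w, heatK d β w * corrF b u (Real.sqrt h • w)) := by
  rw [Eh]
  congr 1
  have hsplit : ∀ (t : ℝ), 0 < t → ∀ (c : Fin N → Fin N → ℝ),
      (∫ w, heatK d t w * corrF c u (Real.sqrt h • w))
        = ∑ i, ∑ j, c i j * ∫ w, heatK d t w * corrI u i j (Real.sqrt h • w) := by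
    intro t ht c
    have e : ∀ w, heatK d t w * corrF c u (Real.sqrt h • w)
        = ∑ i, ∑ j, c i j * (heatK d t w * corrI u i j (Real.sqrt h • w)) := by
      intro w
      rw [corrF, Finset.mul_sum]
      refine Finset.sum_congr rfl fun i _ => ?_
      rw [Finset.mul_sum]
      exact Finset.sum_congr rfl fun j _ => by ring
    rw [integral_congr_ae (ae_of_all _ fun w => e w)]
    rw [aux_integral_double_sum _ (fun i j => (aux_int_heatK_mul ht (aux_corrI_meas hu i j)
      (fun z => (aux_corrI_mem hu i j z).1) (fun z => (aux_corrI_mem hu i j z).2)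
      _).const_mul _)]
    exact Finset.sum_congr rfl fun i _ => Finset.sum_congr rfl fun j _ =>
      integral_const_mul _ _
  rw [hsplit γ hγ a, hsplit β hβ b, ← Finset.sum_add_distrib]
  refine Finset.sum_congr rfl fun i _ => ?_
  rw [← Finset.sum_add_distrib]
  refine Finset.sum_congr rfl fun j _ => ?_
  exact aux_Tij hγ hβ hu (a i j) (b i j) hh i j

lemma aux_F_nsmul {d : ℕ} {F : (Fin d → ℝ) → ℝ}
    (Fsub : ∀ z w, F (z + w) ≤ F z + F w) :
    ∀ (m : ℕ), 1 ≤ m → ∀ y : Fin d → ℝ, F ((m:ℝ) • y) ≤ m * F y := by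
  intro m hm
  induction m, hm using Nat.le_induction with
  | base => intro y; simp
  | succ m hm ih =>
    intro y
    have e : ((m+1 : ℕ) : ℝ) • y = (m:ℝ) • y + y := by
      push_cast
      rw [add_smul, one_smul]
    calc F (((m+1:ℕ):ℝ) • y) ≤ F ((m:ℝ) • y) + F y := by rw [e]; exact Fsub _ _
      _ ≤ m * F y + F y := by linarith [ih y]
      _ = ((m+1:ℕ):ℝ) * F y := by push_cast; ring

lemma aux_mono_core {d : ℕ} {t : ℝ} (ht : 0 < t) {F : (Fin d → ℝ) → ℝ}
    (Fnn : ∀ z, 0 ≤ F z) (Fsub : ∀ z w, F (z + w) ≤ F z + F w)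
    (Fmeas : Measurable F) {M : ℝ} (Fbd : ∀ z, F z ≤ M)
    {h h₀ : ℝ} (hh : 0 < h) (hhh₀ : h ≤ h₀) :
    (Real.sqrt h₀ / (Real.sqrt h + Real.sqrt h₀)) ^ (d + 1) *
      ((Real.sqrt h₀)⁻¹ * ∫ w, heatK d t w * F (Real.sqrt h₀ • w))
      ≤ (Real.sqrt h)⁻¹ * ∫ w, heatK d t w * F (Real.sqrt h • w) := by
  have hh₀ : 0 < h₀ := lt_of_lt_of_le hh hhh₀
  have hsh : 0 < Real.sqrt h := Real.sqrt_pos.2 hh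
  have hsh₀ : 0 < Real.sqrt h₀ := Real.sqrt_pos.2 hh₀
  set lam := Real.sqrt h₀ / Real.sqrt h with hlam
  have hlam1 : 1 ≤ lam := (one_le_div hsh).2 (Real.sqrt_le_sqrt hhh₀)
  have hlam0 : 0 < lam := lt_of_lt_of_le one_pos hlam1
  set n := ⌈lam⌉₊ with hn
  have hn1 : 1 ≤ n := Nat.one_le_iff_ne_zero.2 (Nat.ceil_pos.2 hlam0).ne'
  have hn0 : (0:ℝ) < (n:ℝ) := by exact_mod_cast Nat.lt_of_lt_of_le Nat.zero_lt_one hn1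
  have hnlam : lam ≤ (n:ℝ) := Nat.le_ceil lam
  have hnle : (n:ℝ) ≤ lam + 1 := (Nat.ceil_lt_add_one hlam0.le).le
  set c := lam / (n:ℝ) with hc
  have hc0 : 0 < c := div_pos hlam0 hn0
  have hc1 : c ≤ 1 := (div_le_one hn0).2 hnlam
  have hcinv : 1 ≤ c⁻¹ := (one_le_inv₀ hc0).2 hc1
  have hsh₀eq : Real.sqrt h₀ = lam * Real.sqrt h := by
    rw [hlam]; field_simp
  -- pointwise subdivision bound
  have key1 : ∀ w : Fin d → ℝ, F (Real.sqrt h₀ • w) ≤ n * F ((c * Real.sqrt h) • w) := by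
    intro w
    have e : Real.sqrt h₀ • w = (n:ℝ) • ((c * Real.sqrt h) • w) := by
      rw [smul_smul, hsh₀eq, hc]
      congr 1
      field_simp
    rw [e]
    exact aux_F_nsmul Fsub n hn1 _
  -- integrability
  have int1 : Integrable (fun w => heatK d t w * F (Real.sqrt h₀ • w)) :=
    aux_int_heatK_mul ht Fmeas Fnn Fbd _
  have int2 : Integrable (fun w => heatK d t w * F ((c * Real.sqrt h) • w)) :=
    aux_int_heatK_mul ht Fmeas Fnn Fbd _
  have int3 : Integrable (fun w => heatK d t w * F (Real.sqrt h • w)) :=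
    aux_int_heatK_mul ht Fmeas Fnn Fbd _
  have int4 : Integrable (fun w => heatK d t (c⁻¹ • w) * F (Real.sqrt h • w)) := by
    refine ((aux_heatK_integrable d ht).const_mul M).mono'
      (((aux_heatK_measurable d t).comp (measurable_const_smul c⁻¹)).mul
        (Fmeas.comp (measurable_const_smul (Real.sqrt h)))).aestronglyMeasurable
      (ae_of_all _ fun w => ?_)
    have h1 := aux_heatK_nonneg d ht (c⁻¹ • w)
    have h2 := aux_heatK_anti d ht hcinv w
    have h3 := Fnn (Real.sqrt h • w)
    have h4 := Fbd (Real.sqrt h • w)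
    have h5 := aux_heatK_nonneg d ht w
    rw [Real.norm_eq_abs, abs_of_nonneg (mul_nonneg h1 h3)]
    nlinarith
  have step1 : (∫ w, heatK d t w * F (Real.sqrt h₀ • w))
      ≤ (n:ℝ) * ∫ w, heatK d t w * F ((c * Real.sqrt h) • w) := by
    rw [← integral_const_mul]
    refine integral_mono int1 (int2.const_mul _) fun w => ?_
    have h5 := aux_heatK_nonneg d ht w
    calc heatK d t w * F (Real.sqrt h₀ • w)
        ≤ heatK d t w * ((n:ℝ) * F ((c * Real.sqrt h) • w)) :=
          mul_le_mul_of_nonneg_left (key1 w) h5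
      _ = (n:ℝ) * (heatK d t w * F ((c * Real.sqrt h) • w)) := by ring
  have step2 : (∫ w, heatK d t w * F ((c * Real.sqrt h) • w))
      ≤ (c⁻¹) ^ d * ∫ w, heatK d t w * F (Real.sqrt h • w) := by
    have e1 : ∀ w : Fin d → ℝ, heatK d t w * F ((c * Real.sqrt h) • w)
        = (fun v => heatK d t (c⁻¹ • v) * F (Real.sqrt h • v)) (c • w) := by
      intro w
      dsimp only
      rw [inv_smul_smul₀ hc0.ne', smul_smul, mul_comm (Real.sqrt h) c]
    have e2 := MeasureTheory.Measure.integral_comp_smul (volume : Measure (Fin d → ℝ))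
      (fun v => heatK d t (c⁻¹ • v) * F (Real.sqrt h • v)) c
    rw [Module.finrank_fin_fun] at e2
    calc (∫ w, heatK d t w * F ((c * Real.sqrt h) • w))
        = ∫ w, (fun v => heatK d t (c⁻¹ • v) * F (Real.sqrt h • v)) (c • w) :=
          integral_congr_ae (ae_of_all _ fun w => e1 w)
      _ = |((c ^ d)⁻¹)| * ∫ v, heatK d t (c⁻¹ • v) * F (Real.sqrt h • v) := by
          rw [e2, smul_eq_mul]
      _ ≤ (c ^ d)⁻¹ * ∫ w, heatK d t w * F (Real.sqrt h • w) := by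
          rw [abs_of_nonneg (inv_nonneg.2 (pow_nonneg hc0.le _))]
          refine mul_le_mul_of_nonneg_left ?_ (inv_nonneg.2 (pow_nonneg hc0.le _))
          refine integral_mono int4 int3 fun w => ?_
          exact mul_le_mul_of_nonneg_right (aux_heatK_anti d ht hcinv w) (Fnn _)
      _ = (c⁻¹) ^ d * ∫ w, heatK d t w * F (Real.sqrt h • w) := by rw [inv_pow]
  -- combine
  have hI0 : 0 ≤ ∫ w, heatK d t w * F (Real.sqrt h₀ • w) :=
    integral_nonneg fun w => mul_nonneg (aux_heatK_nonneg d ht w) (Fnn _)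
  have hI : 0 ≤ ∫ w, heatK d t w * F (Real.sqrt h • w) :=
    integral_nonneg fun w => mul_nonneg (aux_heatK_nonneg d ht w) (Fnn _)
  have hchain : (Real.sqrt h₀)⁻¹ * ∫ w, heatK d t w * F (Real.sqrt h₀ • w)
      ≤ ((n:ℝ) / lam) ^ (d+1) * ((Real.sqrt h)⁻¹ * ∫ w, heatK d t w * F (Real.sqrt h • w)) := by
    have h1 : (∫ w, heatK d t w * F (Real.sqrt h₀ • w))
        ≤ (n:ℝ) * ((c⁻¹) ^ d * ∫ w, heatK d t w * F (Real.sqrt h • w)) :=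
      le_trans step1 (mul_le_mul_of_nonneg_left step2 hn0.le)
    have hid : (Real.sqrt h₀)⁻¹ * ((n:ℝ) * ((c⁻¹) ^ d * ∫ w, heatK d t w * F (Real.sqrt h • w)))
        = ((n:ℝ) / lam) ^ (d+1) * ((Real.sqrt h)⁻¹ * ∫ w, heatK d t w * F (Real.sqrt h • w)) := by
      rw [hsh₀eq, hc, inv_div, mul_inv, pow_succ]
      ring
    rw [← hid]
    exact mul_le_mul_of_nonneg_left h1 (inv_nonneg.2 hsh₀.le)
  have hbase : 0 ≤ Real.sqrt h₀ / (Real.sqrt h + Real.sqrt h₀) := by positivity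
  have hbase2 : (Real.sqrt h₀ / (Real.sqrt h + Real.sqrt h₀)) * ((n:ℝ) / lam) ≤ 1 := by
    rw [div_mul_div_comm, div_le_one (by positivity)]
    nlinarith [mul_nonneg hsh₀.le (sub_nonneg.2 hnle), hsh₀eq]
  calc (Real.sqrt h₀ / (Real.sqrt h + Real.sqrt h₀)) ^ (d + 1) *
      ((Real.sqrt h₀)⁻¹ * ∫ w, heatK d t w * F (Real.sqrt h₀ • w))
      ≤ (Real.sqrt h₀ / (Real.sqrt h + Real.sqrt h₀)) ^ (d + 1) *
        (((n:ℝ) / lam) ^ (d+1) * ((Real.sqrt h)⁻¹ * ∫ w, heatK d t w * F (Real.sqrt h • w))) :=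
        mul_le_mul_of_nonneg_left hchain (pow_nonneg hbase _)
    _ = ((Real.sqrt h₀ / (Real.sqrt h + Real.sqrt h₀)) * ((n:ℝ) / lam)) ^ (d+1) *
        ((Real.sqrt h)⁻¹ * ∫ w, heatK d t w * F (Real.sqrt h • w)) := by
        rw [mul_pow]; ring
    _ ≤ 1 * ((Real.sqrt h)⁻¹ * ∫ w, heatK d t w * F (Real.sqrt h • w)) := by
        refine mul_le_mul_of_nonneg_right ?_ (mul_nonneg (inv_nonneg.2 hsh.le) hI)
        exact pow_le_one₀ (mul_nonneg hbase (div_nonneg hn0.le hlam0.le)) hbase2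
    _ = (Real.sqrt h)⁻¹ * ∫ w, heatK d t w * F (Real.sqrt h • w) := one_mul _

lemma aux_tri' {N : ℕ} (a : Fin N → Fin N → ℝ)
    (hadiag : ∀ i, a i i = 0) (hapos : ∀ i j, i ≠ j → 0 < a i j)
    (hatri : ∀ i j k, i ≠ j → j ≠ k → i ≠ k → a i j < a i k + a k j) :
    (∀ i j, 0 ≤ a i j) ∧ (∀ i j k, a i j ≤ a i k + a k j) := by
  have ha0 : ∀ i j, 0 ≤ a i j := by
    intro i j
    by_cases hij : i = j
    · subst hij; rw [hadiag]
    · exact (hapos i j hij).le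
  refine ⟨ha0, fun i j k => ?_⟩
  by_cases hik : i = k
  · subst hik; rw [hadiag, zero_add]
  by_cases hkj : k = j
  · subst hkj; rw [hadiag, add_zero]
  by_cases hij : i = j
  · subst hij; rw [hadiag i]; exact add_nonneg (ha0 i k) (ha0 k i)
  · exact (hatri i j k hij (fun e => hkj e.symm) hik).le


/-- approximate monotonicity of the energies:
`E_h(u) ≥ (√h₀/(√h+√h₀))^{d+1}·E_{h₀}(u)` for `0 < h ≤ h₀`. -/
theorem stmt_8 (d N : ℕ) (γ β : ℝ) (hβ0 : 0 < β) (hβγ : β < γ)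
    (a b : Fin N → Fin N → ℝ)
    (hasymm : ∀ i j, a i j = a j i) (hbsymm : ∀ i j, b i j = b j i)
    (hadiag : ∀ i, a i i = 0) (hbdiag : ∀ i, b i i = 0)
    (hapos : ∀ i j, i ≠ j → 0 < a i j) (hbpos : ∀ i j, i ≠ j → 0 < b i j)
    (hatri : ∀ i j k, i ≠ j → j ≠ k → i ≠ k → a i j < a i k + a k j)
    (hbtri : ∀ i j k, i ≠ j → j ≠ k → i ≠ k → b i j < b i k + b k j)
    (u : (Fin d → ℝ) → Fin N → ℝ) (hu : memM u)
    (h h₀ : ℝ) (hh : 0 < h) (hhh₀ : h ≤ h₀) :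
    (Real.sqrt h₀ / (Real.sqrt h + Real.sqrt h₀)) ^ (d + 1) * Eh γ β a b h₀ u
      ≤ Eh γ β a b h u := by
  have hγ0 : 0 < γ := lt_trans hβ0 hβγ
  have hh₀ : 0 < h₀ := lt_of_lt_of_le hh hhh₀
  obtain ⟨ha0, hatri'⟩ := aux_tri' a hadiag hapos hatri
  obtain ⟨hb0, hbtri'⟩ := aux_tri' b hbdiag hbpos hbtri
  rw [aux_Eh_eq hγ0 hβ0 hu a b hh, aux_Eh_eq hγ0 hβ0 hu a b hh₀]
  have h1 := aux_mono_core hγ0 (aux_corrF_nonneg hu ha0)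
    (fun z w => aux_corrF_subadd hu ha0 hatri' z w) (aux_corrF_meas hu a)
    (aux_corrF_le hu ha0) hh hhh₀
  have h2 := aux_mono_core hβ0 (aux_corrF_nonneg hu hb0)
    (fun z w => aux_corrF_subadd hu hb0 hbtri' z w) (aux_corrF_meas hu b)
    (aux_corrF_le hu hb0) hh hhh₀
  calc (Real.sqrt h₀ / (Real.sqrt h + Real.sqrt h₀)) ^ (d + 1) *
      ((Real.sqrt h₀)⁻¹ * ((∫ w, heatK d γ w * corrF a u (Real.sqrt h₀ • w))
        + ∫ w, heatK d β w * corrF b u (Real.sqrt h₀ • w)))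
      = (Real.sqrt h₀ / (Real.sqrt h + Real.sqrt h₀)) ^ (d + 1) *
          ((Real.sqrt h₀)⁻¹ * ∫ w, heatK d γ w * corrF a u (Real.sqrt h₀ • w))
        + (Real.sqrt h₀ / (Real.sqrt h + Real.sqrt h₀)) ^ (d + 1) *
          ((Real.sqrt h₀)⁻¹ * ∫ w, heatK d β w * corrF b u (Real.sqrt h₀ • w)) := by ring
    _ ≤ (Real.sqrt h)⁻¹ * (∫ w, heatK d γ w * corrF a u (Real.sqrt h • w))
        + (Real.sqrt h)⁻¹ * ∫ w, heatK d β w * corrF b u (Real.sqrt h • w) :=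
        add_le_add h1 h2
    _ = (Real.sqrt h)⁻¹ * ((∫ w, heatK d γ w * corrF a u (Real.sqrt h • w))
        + ∫ w, heatK d β w * corrF b u (Real.sqrt h • w)) := by ring
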